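/- Let f_R : ℝ → [-R,R] be the cutoff function f_R(t) = t for |t| ≤ R, f_R(t) = R·sign(t) otherwise, and let A be a self-adjoint N×N matrix, m ∈ ℕ, and m' an even integer with m' ≥ m. Then ‖A − f_R(A)‖_m ≤ R·(tr_N(A^{m'})/R^{m'})^{1/m}, where ‖·‖_m is the m-norm with respect to the normalized trace tr_N and f_R(A) is defined by functional calculus on the eigenvalues of A. -/

import Mathlib

open scoped BigOperators

/-- The cutoff function `f_R : ℝ → [-R, R]`: `f_R(t) = t` for `|t| ≤ R` and
`f_R(t) = R · sign t` otherwise. -/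
noncomputable def cutoff (R t : ℝ) : ℝ := max (-R) (min R t)

/-- `f_R(A)` for a Hermitian matrix `A`, defined by applying `f_R` to the eigenvalues
in a spectral decomposition `A = U diag(λ) U*`. -/
noncomputable def cutoffMat {N : ℕ} {A : Matrix (Fin N) (Fin N) ℂ}
    (hA : A.IsHermitian) (R : ℝ) : Matrix (Fin N) (Fin N) ℂ :=
  (hA.eigenvectorUnitary : Matrix (Fin N) (Fin N) ℂ) *
    Matrix.diagonal (fun i => ((cutoff R (hA.eigenvalues i) : ℝ) : ℂ)) *
    star (hA.eigenvectorUnitary : Matrix (Fin N) (Fin N) ℂ)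

/-- The normalized trace `m`-norm `‖B‖_m = (tr_N(|B|^m))^(1/m)` of an `N × N` matrix,
computed via the eigenvalues of `B * Bᴴ`. -/
noncomputable def traceMNorm (N : ℕ) (B : Matrix (Fin N) (Fin N) ℂ) (m : ℕ) : ℝ :=
  ((1 / (N : ℝ)) *
      ∑ i, ((Matrix.isHermitian_mul_conjTranspose_self B).eigenvalues i) ^ ((m : ℝ) / 2)) ^
    (1 / (m : ℝ))

section Aux

open Matrix Polynomial

variable {N : ℕ}

lemma my_charpoly_conj (U V M : Matrix (Fin N) (Fin N) ℂ) (hUV : U * V = 1) :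
    (U * M * V).charpoly = M.charpoly := by
  unfold Matrix.charpoly
  have hsc : ∀ (W : Matrix (Fin N) (Fin N) ℂ[X]), W * Matrix.scalar (Fin N) (X : ℂ[X]) =
      Matrix.scalar (Fin N) (X : ℂ[X]) * W := fun W =>
    (Matrix.scalar_commute (X : ℂ[X]) (fun r => Commute.all _ r) W).symm
  have h1 : charmatrix (U * M * V) = U.map C * charmatrix M * V.map C := by
    unfold charmatrix
    simp only [RingHom.mapMatrix_apply, Matrix.map_mul]
    rw [Matrix.mul_sub, Matrix.sub_mul]
    congr 1
    rw [mul_assoc, ← hsc, ← mul_assoc, ← Matrix.map_mul, hUV]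
    simp
  rw [h1, Matrix.det_mul, Matrix.det_mul]
  have : (U.map C).det * (charmatrix M).det * (V.map C).det
      = (charmatrix M).det * ((U * V).map C).det := by
    rw [Matrix.map_mul, Matrix.det_mul]; ring
  rw [this, hUV]
  simp

lemma my_charpoly_diagonal (c : Fin N → ℂ) :
    (Matrix.diagonal c).charpoly = ∏ i, (X - C (c i)) := by
  unfold Matrix.charpoly
  have : charmatrix (Matrix.diagonal c) = Matrix.diagonal (fun i => (X : ℂ[X]) - C (c i)) := by
    ext i j
    by_cases h : i = j
    · subst h; simp
    · simp [charmatrix_apply_ne _ _ _ h, Matrix.diagonal_apply_ne _ h, Matrix.diagonal_apply_ne c h]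
  rw [this, Matrix.det_diagonal]

lemma roots_of_diag_conj (U : Matrix (Fin N) (Fin N) ℂ)
    (hU : U ∈ Matrix.unitaryGroup (Fin N) ℂ) (d : Fin N → ℝ) :
    (U * Matrix.diagonal (fun i => ((d i : ℝ) : ℂ)) * star U).charpoly.roots
      = Finset.univ.val.map (fun i => ((d i : ℝ) : ℂ)) := by
  rw [my_charpoly_conj _ _ _ (Matrix.mem_unitaryGroup_iff.mp hU), my_charpoly_diagonal,
    Finset.prod_eq_multiset_prod]
  have := roots_multiset_prod_X_sub_C (Finset.univ.val.map (fun i => ((d i : ℝ) : ℂ)))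
  rwa [Multiset.map_map] at this

lemma eig_multiset {M : Matrix (Fin N) (Fin N) ℂ} (hM : M.IsHermitian)
    (U : Matrix (Fin N) (Fin N) ℂ) (hU : U ∈ Matrix.unitaryGroup (Fin N) ℂ) (d : Fin N → ℝ)
    (h : M = U * Matrix.diagonal (fun i => ((d i : ℝ) : ℂ)) * star U) :
    Finset.univ.val.map hM.eigenvalues = Finset.univ.val.map d := by
  have h1 : M.charpoly.roots = Finset.univ.val.map (fun i => ((d i : ℝ) : ℂ)) := by
    rw [h]; exact roots_of_diag_conj U hU d
  have h2 : M.charpoly.roots = Finset.univ.val.map (fun i => ((hM.eigenvalues i : ℝ) : ℂ)) := by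
    have hs := hM.spectral_theorem
    have : M.charpoly.roots = ((hM.eigenvectorUnitary : Matrix (Fin N) (Fin N) ℂ) *
        Matrix.diagonal (fun i => ((hM.eigenvalues i : ℝ) : ℂ)) *
        star (hM.eigenvectorUnitary : Matrix (Fin N) (Fin N) ℂ)).charpoly.roots := by
      congr 1
      conv_lhs => rw [hs]
      rfl
    rw [this]
    exact roots_of_diag_conj _ hM.eigenvectorUnitary.2 _
  have h3 : Finset.univ.val.map (fun i => ((hM.eigenvalues i : ℝ) : ℂ))
      = Finset.univ.val.map (fun i => ((d i : ℝ) : ℂ)) := h2.symm.trans h1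
  have h4 : Multiset.map Complex.ofReal (Finset.univ.val.map hM.eigenvalues)
      = Multiset.map Complex.ofReal (Finset.univ.val.map d) := by
    rw [Multiset.map_map, Multiset.map_map]; exact h3
  exact Multiset.map_injective Complex.ofReal_injective h4

lemma eig_sum {M : Matrix (Fin N) (Fin N) ℂ} (hM : M.IsHermitian)
    (U : Matrix (Fin N) (Fin N) ℂ) (hU : U ∈ Matrix.unitaryGroup (Fin N) ℂ) (d : Fin N → ℝ)
    (h : M = U * Matrix.diagonal (fun i => ((d i : ℝ) : ℂ)) * star U) (g : ℝ → ℝ) :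
    ∑ i, g (hM.eigenvalues i) = ∑ i, g (d i) := by
  have h1 := eig_multiset hM U hU d h
  have h2 : ((Finset.univ.val.map hM.eigenvalues).map g).sum
      = ((Finset.univ.val.map d).map g).sum := by rw [h1]
  rw [Multiset.map_map, Multiset.map_map] at h2
  exact h2

lemma unitary_conj_pow (U D : Matrix (Fin N) (Fin N) ℂ) (h1 : U * star U = 1)
    (h2 : star U * U = 1) (k : ℕ) : (U * D * star U) ^ k = U * D ^ k * star U := by
  induction k with
  | zero => simpa using h1.symm
  | succ n ih =>
    have hcancel : ∀ X : Matrix (Fin N) (Fin N) ℂ, star U * (U * X) = X := fun X => by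
      rw [← mul_assoc, h2, one_mul]
    rw [pow_succ, pow_succ, ih]
    simp only [mul_assoc, hcancel]

lemma sub_cutoffMat_eq (A : Matrix (Fin N) (Fin N) ℂ) (hA : A.IsHermitian) (R : ℝ) :
    A - cutoffMat hA R = (hA.eigenvectorUnitary : Matrix (Fin N) (Fin N) ℂ) *
      Matrix.diagonal (fun i => ((hA.eigenvalues i - cutoff R (hA.eigenvalues i) : ℝ) : ℂ)) *
      star (hA.eigenvectorUnitary : Matrix (Fin N) (Fin N) ℂ) := by
  have h := congrArg (fun X => X - cutoffMat hA R) hA.spectral_theorem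
  simp only [Unitary.conjStarAlgAut_apply] at h
  rw [h]
  unfold cutoffMat
  rw [← Matrix.sub_mul, ← Matrix.mul_sub]
  congr 2
  ext i j
  rcases eq_or_ne i j with rfl | hij
  · simp only [Matrix.sub_apply, Matrix.diagonal_apply_eq, Function.comp_apply]
    push_cast
    rfl
  · simp [Matrix.diagonal_apply_ne _ hij]

lemma diag_conj_mul_conjTranspose (U : Matrix (Fin N) (Fin N) ℂ)
    (hU : U ∈ Matrix.unitaryGroup (Fin N) ℂ) (d : Fin N → ℝ) :
    (U * Matrix.diagonal (fun i => ((d i : ℝ) : ℂ)) * star U) *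
      (U * Matrix.diagonal (fun i => ((d i : ℝ) : ℂ)) * star U)ᴴ
    = U * Matrix.diagonal (fun i => ((d i ^ 2 : ℝ) : ℂ)) * star U := by
  have h2 : star U * U = 1 := Matrix.mem_unitaryGroup_iff'.mp hU
  have hD : (U * Matrix.diagonal (fun i => ((d i : ℝ) : ℂ)) * star U)ᴴ
      = U * Matrix.diagonal (fun i => ((d i : ℝ) : ℂ)) * star U := by
    rw [Matrix.conjTranspose_mul, Matrix.conjTranspose_mul, Matrix.diagonal_conjTranspose]
    rw [← Matrix.star_eq_conjTranspose U, ← Matrix.star_eq_conjTranspose (star U), star_star]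
    have hst : (star fun i => ((d i : ℝ) : ℂ)) = fun i => ((d i : ℝ) : ℂ) := by
      funext i; simp
    rw [hst, mul_assoc]
  rw [hD]
  have hcancel : ∀ X : Matrix (Fin N) (Fin N) ℂ, star U * (U * X) = X := fun X => by
    rw [← mul_assoc, h2, one_mul]
  have hdd : Matrix.diagonal (fun i => ((d i : ℝ) : ℂ)) * Matrix.diagonal (fun i => ((d i : ℝ) : ℂ))
      = Matrix.diagonal (fun i => ((d i ^ 2 : ℝ) : ℂ)) := by
    rw [Matrix.diagonal_mul_diagonal]
    congr 1
    funext i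
    push_cast
    ring
  calc (U * Matrix.diagonal (fun i => ((d i : ℝ) : ℂ)) * star U) *
        (U * Matrix.diagonal (fun i => ((d i : ℝ) : ℂ)) * star U)
      = U * (Matrix.diagonal (fun i => ((d i : ℝ) : ℂ)) *
          Matrix.diagonal (fun i => ((d i : ℝ) : ℂ))) * star U := by
        simp only [mul_assoc, hcancel]
    _ = U * Matrix.diagonal (fun i => ((d i ^ 2 : ℝ) : ℂ)) * star U := by rw [hdd]

lemma trace_pow_eq (A : Matrix (Fin N) (Fin N) ℂ) (hA : A.IsHermitian) (k : ℕ) :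
    (A ^ k).trace.re = ∑ i, hA.eigenvalues i ^ k := by
  have h := congrArg (fun X : Matrix (Fin N) (Fin N) ℂ => X ^ k) hA.spectral_theorem
  simp only [Unitary.conjStarAlgAut_apply] at h
  set U : Matrix (Fin N) (Fin N) ℂ := (hA.eigenvectorUnitary : Matrix (Fin N) (Fin N) ℂ) with hUdef
  have h1 : U * star U = 1 := Matrix.mem_unitaryGroup_iff.mp hA.eigenvectorUnitary.2
  have h2 : star U * U = 1 := Matrix.mem_unitaryGroup_iff'.mp hA.eigenvectorUnitary.2
  rw [h, unitary_conj_pow U _ h1 h2 k, Matrix.trace_mul_cycle, h2, one_mul,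
    Matrix.diagonal_pow, Matrix.trace_diagonal]
  simp only [Pi.pow_apply, Function.comp_apply]
  have : ∑ i, (RCLike.ofReal (hA.eigenvalues i) : ℂ) ^ k
      = ((∑ i, hA.eigenvalues i ^ k : ℝ) : ℂ) := by
    push_cast
    rfl
  rw [this, Complex.ofReal_re]

lemma cutoff_pointwise (R t : ℝ) (hR : 0 < R) (m m' : ℕ) (hm : 1 ≤ m)
    (hm' : Even m') (hmm' : m ≤ m') :
    |t - cutoff R t| ^ m * R ^ m' ≤ R ^ m * t ^ m' := by
  by_cases h : |t| ≤ R
  · have hc : cutoff R t = t := by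
      unfold cutoff
      rw [abs_le] at h
      rw [min_eq_right h.2, max_eq_right h.1]
    rw [hc, sub_self, abs_zero, zero_pow (by omega), zero_mul]
    exact mul_nonneg (by positivity) (hm'.pow_nonneg t)
  · push_neg at h
    have habs : |t - cutoff R t| = |t| - R := by
      unfold cutoff
      rcases le_or_gt 0 t with ht | ht
      · have htR : R < t := by rwa [abs_of_nonneg ht] at h
        rw [min_eq_left htR.le, max_eq_right (by linarith), abs_of_nonneg ht,
          abs_of_nonneg (by linarith)]
      · have htR : t < -R := by
          rw [abs_of_neg ht] at h; linarith
        rw [min_eq_right (by linarith), max_eq_left (by linarith), abs_of_neg ht,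
          abs_of_neg (by linarith)]
        ring
    rw [habs]
    have h1 : (|t| - R) ^ m ≤ |t| ^ m :=
      pow_le_pow_left₀ (by linarith) (by linarith) m
    have h2 : R ^ (m' - m) ≤ |t| ^ (m' - m) :=
      pow_le_pow_left₀ hR.le h.le _
    calc (|t| - R) ^ m * R ^ m'
        = ((|t| - R) ^ m * R ^ (m' - m)) * R ^ m := by
          rw [mul_assoc, ← pow_add]
          congr 2
          omega
      _ ≤ (|t| ^ m * |t| ^ (m' - m)) * R ^ m := by
          apply mul_le_mul_of_nonneg_right _ (by positivity)
          exact mul_le_mul h1 h2 (by positivity) (by positivity)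
      _ = R ^ m * t ^ m' := by
          rw [← pow_add]
          have : m + (m' - m) = m' := by omega
          rw [this, hm'.pow_abs, mul_comm]

end Aux

open Matrix

/-- If `A` is a self-adjoint `N × N` matrix, `m ≥ 1`, and `m'` is an even integer with
`m' ≥ m`, then `‖A − f_R(A)‖_m ≤ R · (tr_N(A^{m'}) / R^{m'})^{1/m}`. -/
theorem cutoff_traceMNorm_bound (N : ℕ) (hN : 0 < N) (A : Matrix (Fin N) (Fin N) ℂ)
    (hA : A.IsHermitian) (R : ℝ) (hR : 0 < R) (m m' : ℕ) (hm : 1 ≤ m)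
    (hm' : Even m') (hmm' : m ≤ m') :
    traceMNorm N (A - cutoffMat hA R) m ≤
      R * (((1 / (N : ℝ)) * (A ^ m').trace.re) / R ^ m') ^ (1 / (m : ℝ)) := by
  classical
  set lam : Fin N → ℝ := hA.eigenvalues with hlam
  set d : Fin N → ℝ := fun i => lam i - cutoff R (lam i) with hd
  set U : Matrix (Fin N) (Fin N) ℂ := (hA.eigenvectorUnitary : Matrix (Fin N) (Fin N) ℂ)
    with hU
  set B : Matrix (Fin N) (Fin N) ℂ := A - cutoffMat hA R with hB
  -- decomposition of B and B * Bᴴ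
  have hBdec : B = U * Matrix.diagonal (fun i => ((d i : ℝ) : ℂ)) * star U :=
    sub_cutoffMat_eq A hA R
  have hBB : B * Bᴴ = U * Matrix.diagonal (fun i => ((d i ^ 2 : ℝ) : ℂ)) * star U := by
    rw [hBdec]
    exact diag_conj_mul_conjTranspose U hA.eigenvectorUnitary.2 d
  -- sum over eigenvalues of B * Bᴴ
  have hsum := eig_sum (Matrix.isHermitian_mul_conjTranspose_self B) U
    hA.eigenvectorUnitary.2 (fun i => d i ^ 2) hBB (fun x => x ^ ((m : ℝ) / 2))
  -- rewrite (d i ^ 2) ^ (m/2) = |d i| ^ m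
  have hpt : ∀ x : ℝ, (x ^ 2 : ℝ) ^ ((m : ℝ) / 2) = |x| ^ m := by
    intro x
    rw [← sq_abs, ← Real.rpow_natCast |x| 2, ← Real.rpow_mul (abs_nonneg x),
      ← Real.rpow_natCast |x| m]
    congr 1
    push_cast
    ring
  have hsum' : ∑ i, ((Matrix.isHermitian_mul_conjTranspose_self B).eigenvalues i) ^ ((m : ℝ) / 2)
      = ∑ i, |d i| ^ m := by
    rw [hsum]
    exact Finset.sum_congr rfl fun i _ => hpt (d i)
  -- trace of A ^ m'
  have htr : (A ^ m').trace.re = ∑ i, lam i ^ m' := trace_pow_eq A hA m'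
  rw [htr]
  unfold traceMNorm
  rw [hsum']
  -- now a purely real inequality
  have key : ∀ i, |d i| ^ m * R ^ m' ≤ R ^ m * lam i ^ m' := fun i =>
    cutoff_pointwise R (lam i) hR m m' hm hm' hmm'
  set T : ℝ := (1 / (N : ℝ)) * ∑ i, lam i ^ m' with hT
  have hTnn : 0 ≤ T := by
    apply mul_nonneg (by positivity)
    exact Finset.sum_nonneg fun i _ => hm'.pow_nonneg _
  have hRm : (R ^ m : ℝ) ^ (1 / (m : ℝ)) = R := by
    rw [← Real.rpow_natCast R m, ← Real.rpow_mul hR.le, mul_one_div,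
      div_self (by positivity : (m : ℝ) ≠ 0), Real.rpow_one]
  have hrhs : (R ^ m * T / R ^ m') ^ (1 / (m : ℝ)) = R * (T / R ^ m') ^ (1 / (m : ℝ)) := by
    rw [show R ^ m * T / R ^ m' = R ^ m * (T / R ^ m') by ring,
      Real.mul_rpow (by positivity) (by positivity), hRm]
  rw [← hrhs]
  apply Real.rpow_le_rpow
  · apply mul_nonneg (by positivity)
    exact Finset.sum_nonneg fun i _ => by positivity
  · rw [le_div_iff₀ (by positivity : (0:ℝ) < R ^ m')]
    calc (1 / (N : ℝ) * ∑ i, |d i| ^ m) * R ^ m'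
        = 1 / (N : ℝ) * ∑ i, |d i| ^ m * R ^ m' := by
          rw [mul_assoc, Finset.sum_mul]
      _ ≤ 1 / (N : ℝ) * ∑ i, R ^ m * lam i ^ m' := by
          apply mul_le_mul_of_nonneg_left _ (by positivity)
          exact Finset.sum_le_sum fun i _ => key i
      _ = R ^ m * T := by
          rw [hT, Finset.mul_sum]
          rw [Finset.mul_sum, Finset.mul_sum]
          congr 1
          funext i
          ring
  · positivity
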